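/- Theorem 1, case B⁺₁,₌,₌: Assume there exist a > 0 and continuously differentiable functions bᵤ, bₗ : [0,a] → ℝ with bᵤ(0) = bₗ(0) = 0, bᵤ'(0) = bₗ'(0) = 0, bᵤ convex and bₗ concave on [0,a], such that (x, bᵤ(x)) ∈ Ĝ and (x, bₗ(x)) ∈ Ĝ for every x ∈ (0,a], the boundary conditions (5⁺) hold: f₀(x, bᵤ(x)) ≤ bᵤ'(x) and f₀(x, bₗ(x)) ≥ bₗ'(x) for all x ∈ (0,a], and there exists c ∈ (0,a] such that every point (x,y) with 0 < x ≤ c and bₗ(x) < y < bᵤ(x) belongs to G. Then there exist h ∈ (0,c] and a function φ : [0,h] → ℝ with φ(0) = 0 which is a solution of y' = f₀(x,y) with graph in G̃ on [0,h]. -/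

import Mathlib

open Set Filter Topology MeasureTheory

/-- Comparison lemma: strict differential inequality at crossing points forces ordering. -/
lemma cmp_lemma {c : ℝ} (u w du dw : ℝ → ℝ)
    (hu : ∀ x ∈ Icc (0:ℝ) c, HasDerivWithinAt u (du x) (Icc (0:ℝ) c) x)
    (hw : ∀ x ∈ Icc (0:ℝ) c, HasDerivWithinAt w (dw x) (Icc (0:ℝ) c) x)
    (h0 : w 0 ≤ u 0)
    (hlt : ∀ x ∈ Icc (0:ℝ) c, w x = u x → dw x < du x) :
    ∀ x ∈ Icc (0:ℝ) c, w x ≤ u x := by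
  intro x₁ hx₁
  by_contra hgt
  push_neg at hgt
  set ψ : ℝ → ℝ := fun x => w x - u x with hψdef
  have hψc : ContinuousOn ψ (Icc 0 c) := fun x hx =>
    ((hw x hx).continuousWithinAt.sub (hu x hx).continuousWithinAt)
  set T : Set ℝ := Icc 0 x₁ ∩ ψ ⁻¹' (Iic 0) with hT
  have hTsub : T ⊆ Icc 0 c := fun t ht => ⟨ht.1.1, ht.1.2.trans hx₁.2⟩
  have hTne : T.Nonempty := ⟨0, ⟨le_rfl, hx₁.1⟩, by simp [hψdef, sub_nonpos.mpr h0]⟩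
  have hTbdd : BddAbove T := ⟨x₁, fun t ht => ht.1.2⟩
  have hTclosed : IsClosed T :=
    (hψc.mono (Icc_subset_Icc_right hx₁.2)).preimage_isClosed_of_isClosed isClosed_Icc isClosed_Iic
  set x₀ : ℝ := sSup T with hx₀def
  have hx₀T : x₀ ∈ T := hTclosed.csSup_mem hTne hTbdd
  have hx₀mem : x₀ ∈ Icc 0 x₁ := hx₀T.1
  have hψx₀le : ψ x₀ ≤ 0 := hx₀T.2
  have hx₀c : x₀ ∈ Icc 0 c := hTsub hx₀T
  have hψx₁ : 0 < ψ x₁ := by simp [hψdef]; linarith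
  have hx₀lt : x₀ < x₁ := by
    rcases eq_or_lt_of_le hx₀mem.2 with h | h
    · exfalso; rw [h] at hψx₀le; linarith
    · exact h
  have hpos : ∀ x ∈ Ioc x₀ x₁, 0 < ψ x := by
    intro x hx
    by_contra hle
    push_neg at hle
    have hxT : x ∈ T := ⟨⟨hx₀mem.1.trans hx.1.le, hx.2⟩, hle⟩
    exact absurd (le_csSup hTbdd hxT) (not_le.mpr hx.1)
  have hne : (𝓝[Ioc x₀ x₁] x₀).NeBot := by
    rw [nhdsWithin_Ioc_eq_nhdsGT hx₀lt]; infer_instance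
  have hIocsub : Ioc x₀ x₁ ⊆ Icc 0 c := fun t ht => ⟨hx₀c.1.trans ht.1.le, ht.2.trans hx₁.2⟩
  have htend : Tendsto ψ (𝓝[Ioc x₀ x₁] x₀) (𝓝 (ψ x₀)) := (hψc x₀ hx₀c).mono hIocsub
  have hψx₀ge : 0 ≤ ψ x₀ :=
    ge_of_tendsto htend (eventually_mem_nhdsWithin.mono fun x hx => (hpos x hx).le)
  have hψx₀ : ψ x₀ = 0 := le_antisymm hψx₀le hψx₀ge
  have heq : w x₀ = u x₀ := by have := hψx₀; simp [hψdef] at this; linarith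
  have hdlt : dw x₀ < du x₀ := hlt x₀ hx₀c heq
  have hdd : HasDerivWithinAt ψ (dw x₀ - du x₀) (Icc 0 c) x₀ := (hw _ hx₀c).sub (hu _ hx₀c)
  have hslope := hasDerivWithinAt_iff_tendsto_slope.mp hdd
  have hsub2 : Ioc x₀ x₁ ⊆ Icc 0 c \ {x₀} := fun t ht =>
    ⟨hIocsub ht, by simp only [mem_singleton_iff]; exact ne_of_gt ht.1⟩
  have hslope' : Tendsto (slope ψ x₀) (𝓝[Ioc x₀ x₁] x₀) (𝓝 (dw x₀ - du x₀)) :=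
    hslope.mono_left (nhdsWithin_mono _ hsub2)
  have hev : ∀ᶠ x in 𝓝[Ioc x₀ x₁] x₀, slope ψ x₀ x < 0 :=
    hslope'.eventually_lt_const (by linarith)
  obtain ⟨x, hxs, hxmem⟩ := (hev.and eventually_mem_nhdsWithin).exists
  have hxx₀ : 0 < x - x₀ := by linarith [hxmem.1]
  rw [slope_def_field, hψx₀, sub_zero, div_lt_iff₀ hxx₀, zero_mul] at hxs
  exact absurd hxs (not_lt.mpr (hpos x hxmem).le)

/-- A convex function vanishing with zero derivative at the left endpoint is nonnegative. -/
lemma aux_convex_nonneg (a : ℝ) (ha : 0 < a) (f : ℝ → ℝ)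
    (hd : HasDerivWithinAt f 0 (Icc (0:ℝ) a) 0) (hf0 : f 0 = 0)
    (hcv : ConvexOn ℝ (Icc (0:ℝ) a) f) :
    ∀ x ∈ Icc (0:ℝ) a, 0 ≤ f x := by
  intro x hx
  rcases eq_or_lt_of_le hx.1 with h0 | h0
  · rw [← h0, hf0]
  have hslope : Tendsto (slope f 0) (𝓝[Icc (0:ℝ) a \ {0}] 0) (𝓝 0) :=
    hasDerivWithinAt_iff_tendsto_slope.mp hd
  have hset : Icc (0:ℝ) a \ {0} = Ioc 0 a := by
    ext t
    simp only [mem_diff, mem_Icc, mem_singleton_iff, mem_Ioc]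
    constructor
    · rintro ⟨⟨h1, h2⟩, h3⟩; exact ⟨h1.lt_of_ne (Ne.symm h3), h2⟩
    · rintro ⟨h1, h2⟩; exact ⟨⟨h1.le, h2⟩, h1.ne'⟩
  rw [hset, nhdsWithin_Ioc_eq_nhdsGT ha] at hslope
  have hmono : ∀ᶠ t in 𝓝[>] (0:ℝ), slope f 0 t ≤ slope f 0 x := by
    filter_upwards [Ioo_mem_nhdsGT_of_mem (by constructor <;> simp [h0] : (0:ℝ) ∈ Ico 0 x)]
      with t ht
    have ht0 : 0 < t := ht.1
    have htx : t < x := ht.2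
    have hxa : x ∈ Icc (0:ℝ) a := hx
    have h0a : (0:ℝ) ∈ Icc (0:ℝ) a := ⟨le_rfl, ha.le⟩
    have hl1 : 0 ≤ 1 - t / x := by
      have : t / x ≤ 1 := (div_le_one h0).mpr htx.le
      linarith
    have hl2 : 0 ≤ t / x := by positivity
    have hsum : (1 - t/x) + t/x = 1 := by ring
    have := hcv.2 h0a hxa hl1 hl2 hsum
    simp only [smul_eq_mul, mul_zero, zero_add, hf0] at this
    have htt : t / x * x = t := div_mul_cancel₀ t h0.ne'
    rw [htt] at this
    rw [slope_def_field, slope_def_field, hf0, sub_zero, sub_zero, sub_zero, sub_zero]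
    rw [div_le_div_iff₀ ht0 h0]
    calc f t * x ≤ (t/x * f x) * x := by nlinarith
      _ = f x * t := by field_simp
  have hle : (0:ℝ) ≤ slope f 0 x := le_of_tendsto hslope hmono
  rw [slope_def_field, hf0, sub_zero, sub_zero] at hle
  nlinarith [mul_nonneg hle h0.le, div_mul_cancel₀ (f x) h0.ne']

/-- Peano existence theorem for a bounded, uniformly continuous field, on `[0, c]`,
with initial condition `φ 0 = 0`. -/
lemma peano_exists (F : ℝ × ℝ → ℝ) (hFc : Continuous F) (M : ℝ)
    (hM : ∀ p, |F p| ≤ M)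
    (hUC : ∀ ε > 0, ∃ δ > 0, ∀ p q : ℝ × ℝ, dist p q < δ → |F p - F q| < ε)
    (c : ℝ) (hc : 0 < c) :
    ∃ φ : ℝ → ℝ, φ 0 = 0 ∧
      ∀ x ∈ Icc (0:ℝ) c, HasDerivWithinAt φ (F (x, φ x)) (Icc (0:ℝ) c) x := by
  have hM0 : 0 ≤ M := (abs_nonneg _).trans (hM (0, 0))
  -- inf-convolution approximations
  set g : ℝ → (ℝ × ℝ) → ℝ := fun L p => ⨅ q : ℝ × ℝ, (F q + L * dist p q) with hgdef
  have hbdd : ∀ L, 0 ≤ L → ∀ p : ℝ × ℝ, BddBelow (range fun q : ℝ × ℝ => F q + L * dist p q) := by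
    intro L hL p
    refine ⟨-M, ?_⟩
    rintro y ⟨q, rfl⟩
    have h1 := (abs_le.mp (hM q)).1
    have h2 : 0 ≤ L * dist p q := mul_nonneg hL dist_nonneg
    dsimp only
    linarith
  have hgle : ∀ L, 0 ≤ L → ∀ p, g L p ≤ F p := by
    intro L hL p
    have := ciInf_le (hbdd L hL p) p
    simpa using this
  have hgge : ∀ L, 0 ≤ L → ∀ p, -M ≤ g L p := by
    intro L hL p
    refine le_ciInf fun q => ?_
    have h1 := (abs_le.mp (hM q)).1
    have h2 : 0 ≤ L * dist p q := mul_nonneg hL dist_nonneg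
    linarith
  have hgabs : ∀ L, 0 ≤ L → ∀ p, |g L p| ≤ M :=
    fun L hL p => abs_le.mpr ⟨hgge L hL p, (hgle L hL p).trans (abs_le.mp (hM p)).2⟩
  have hglip : ∀ L, 0 ≤ L → ∀ p p', g L p ≤ g L p' + L * dist p p' := by
    intro L hL p p'
    have key : ∀ q : ℝ × ℝ, g L p - L * dist p p' ≤ F q + L * dist p' q := by
      intro q
      have h1 : g L p ≤ F q + L * dist p q := ciInf_le (hbdd L hL p) q
      have h2 : dist p q ≤ dist p p' + dist p' q := dist_triangle p p' q
      nlinarith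
    have := le_ciInf key
    rw [hgdef] at *
    linarith
  have happrox : ∀ ε > (0:ℝ), ∃ L₀, 0 ≤ L₀ ∧ ∀ L, L₀ ≤ L → ∀ p, F p - ε ≤ g L p := by
    intro ε hε
    obtain ⟨δ, hδ, hδ'⟩ := hUC ε hε
    refine ⟨(2 * M + 1) / δ, by positivity, fun L hL p => ?_⟩
    have hL0 : (0:ℝ) ≤ L := le_trans (by positivity) hL
    refine le_ciInf fun q => ?_
    rcases lt_or_ge (dist p q) δ with h | h
    · have h1 := (abs_lt.mp (hδ' p q h)).2
      have h2 : 0 ≤ L * dist p q := mul_nonneg hL0 dist_nonneg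
      linarith
    · have h1 : (2 * M + 1) / δ * δ ≤ L * dist p q :=
        mul_le_mul hL h hδ.le hL0
      rw [div_mul_cancel₀ _ hδ.ne'] at h1
      have h2 := (abs_le.mp (hM q)).1
      have h3 := (abs_le.mp (hM p)).2
      linarith
  -- epsilon sequence
  set ε : ℕ → ℝ := fun n => (1/4 : ℝ) ^ (n + 1) with hεdef
  have hεpos : ∀ n, 0 < ε n := fun n => by positivity
  have hεle : ∀ n, ε n ≤ 1/4 := by
    intro n
    calc (1/4 : ℝ) ^ (n+1) ≤ (1/4 : ℝ) ^ 1 :=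
          pow_le_pow_of_le_one (by norm_num) (by norm_num) (by omega)
      _ = 1/4 := pow_one _
  have h2ε : ∀ n, 2 * ε (n + 1) < ε n := by
    intro n
    have : ε (n + 1) = ε n * (1/4) := by rw [hεdef]; ring
    rw [this]
    have := hεpos n
    linarith
  have hεtend : Tendsto ε atTop (𝓝 0) := by
    have h1 : Tendsto (fun n : ℕ => (1/4 : ℝ) ^ n) atTop (𝓝 0) :=
      tendsto_pow_atTop_nhds_zero_of_lt_one (by norm_num) (by norm_num)
    exact h1.comp (tendsto_add_atTop_nat 1)
  choose L hL0 hLapp using fun n => happrox (ε n) (hεpos n)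
  set v : ℕ → (ℝ × ℝ) → ℝ := fun n p => g (L n) p + 2 * ε n with hvdef
  have hvub : ∀ n p, v n p ≤ F p + 2 * ε n := fun n p => by
    have := hgle (L n) (hL0 n) p; simp only [hvdef]; linarith
  have hvlb : ∀ n p, F p + ε n ≤ v n p := fun n p => by
    have := hLapp n (L n) le_rfl p; simp only [hvdef]; linarith
  have hvabs : ∀ n p, |v n p| ≤ M + 1 := by
    intro n p
    have h1 := (abs_le.mp (hgabs (L n) (hL0 n) p)).1
    have h2 := (abs_le.mp (hgabs (L n) (hL0 n) p)).2
    have h3 := hεpos n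
    have h4 := hεle n
    rw [abs_le]
    constructor <;> simp only [hvdef] <;> linarith
  have hvlipd : ∀ n (p p' : ℝ × ℝ), dist (v n p) (v n p') ≤ L n * dist p p' := by
    intro n p p'
    rw [Real.dist_eq, abs_le]
    have h1 := hglip (L n) (hL0 n) p p'
    have h2 := hglip (L n) (hL0 n) p' p
    rw [dist_comm p' p] at h2
    constructor <;> simp only [hvdef] <;> linarith
  have hvlip : ∀ n, LipschitzWith (Real.toNNReal (L n)) (v n) := by
    intro n
    apply LipschitzWith.of_dist_le_mul
    intro p p'
    rw [Real.coe_toNNReal _ (hL0 n)]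
    exact hvlipd n p p'
  have hvcont : ∀ n, Continuous (v n) := fun n => (hvlip n).continuous
  -- Picard-Lindelöf solutions
  have hPL : ∀ n, ∃ u : ℝ → ℝ, u 0 = 0 ∧
      ∀ x ∈ Icc (0:ℝ) c, HasDerivWithinAt u (v n (x, u x)) (Icc (0:ℝ) c) x := by
    intro n
    have hpl : IsPicardLindelof (fun t y => v n (t, y)) (tmin := 0) (tmax := c)
        ⟨0, ⟨le_rfl, hc.le⟩⟩ 0 (Real.toNNReal ((M + 1) * c)) 0 (Real.toNNReal (M + 1))
        (Real.toNNReal (L n)) := by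
      constructor
      · intro t _
        apply LipschitzWith.lipschitzOnWith
        apply LipschitzWith.of_dist_le_mul
        intro y y'
        rw [Real.coe_toNNReal _ (hL0 n)]
        calc dist (v n (t, y)) (v n (t, y')) ≤ L n * dist (t, y) ((t, y') : ℝ × ℝ) :=
              hvlipd n _ _
          _ = L n * dist y y' := by rw [Prod.dist_eq]; simp only [dist_self]; rw [max_eq_right dist_nonneg]
      · intro x _
        exact ((hvcont n).comp (continuous_id.prodMk continuous_const)).continuousOn
      · intro t _ x _
        rw [Real.norm_eq_abs, Real.coe_toNNReal _ (by linarith)]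
        exact hvabs n _
      · have : max (c - 0) (0 - 0) = c := by
          rw [sub_zero, sub_zero, max_eq_left hc.le]
        simp only [NNReal.coe_zero, sub_zero, this]
        rw [Real.coe_toNNReal _ (by linarith), Real.coe_toNNReal _ (by positivity), max_eq_left hc.le]
    exact hpl.exists_eq_forall_mem_Icc_hasDerivWithinAt₀
  choose u hu0 hud using hPL
  -- uniform Lipschitz bound on solutions
  have huLip : ∀ n, ∀ x ∈ Icc (0:ℝ) c, ∀ y ∈ Icc (0:ℝ) c,
      |u n x - u n y| ≤ (M + 1) * |x - y| := by
    intro n x hx y hy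
    have := (convex_Icc (0:ℝ) c).norm_image_sub_le_of_norm_hasDerivWithin_le
      (f' := fun x => v n (x, u n x)) (fun z hz => hud n z hz)
      (fun z _ => by rw [Real.norm_eq_abs]; exact hvabs n _) hy hx
    simpa [Real.norm_eq_abs] using this
  have hub : ∀ n, ∀ x ∈ Icc (0:ℝ) c, |u n x| ≤ (M + 1) * c := by
    intro n x hx
    have h1 := huLip n x hx 0 ⟨le_rfl, hc.le⟩
    rw [hu0 n, sub_zero, sub_zero] at h1
    have : |x| ≤ c := by rw [abs_of_nonneg hx.1]; exact hx.2
    nlinarith [abs_nonneg (u n x)]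
  -- monotone decreasing in n
  have hmono : ∀ n, ∀ x ∈ Icc (0:ℝ) c, u (n + 1) x ≤ u n x := by
    intro n
    apply cmp_lemma (u n) (u (n+1)) (fun x => v n (x, u n x)) (fun x => v (n+1) (x, u (n+1) x))
      (hud n) (hud (n+1)) (by rw [hu0, hu0])
    intro x _ heq
    rw [heq]
    calc v (n+1) (x, u n x) ≤ F (x, u n x) + 2 * ε (n+1) := hvub _ _
      _ < F (x, u n x) + ε n := by linarith [h2ε n]
      _ ≤ v n (x, u n x) := hvlb _ _
  -- limit function
  set pc : ℝ → ℝ := fun x => max 0 (min x c) with hpcdef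
  have hpc_mem : ∀ x, pc x ∈ Icc (0:ℝ) c :=
    fun x => ⟨le_max_left _ _, max_le hc.le (min_le_right _ _)⟩
  have hpc_id : ∀ x ∈ Icc (0:ℝ) c, pc x = x := by
    intro x hx
    rw [hpcdef]
    simp only []
    rw [min_eq_left hx.2, max_eq_right hx.1]
  have hpc_lip : ∀ x y, |pc x - pc y| ≤ |x - y| := by
    intro x y
    calc |pc x - pc y| ≤ max |(0:ℝ) - 0| |min x c - min y c| := abs_max_sub_max_le_max _ _ _ _
      _ = |min x c - min y c| := by simp
      _ ≤ max |x - y| |c - c| := abs_min_sub_min_le_max _ _ _ _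
      _ = |x - y| := by simp
  set φ : ℝ → ℝ := fun x => ⨅ n, u n (pc x) with hφdef
  have hbddb : ∀ x, BddBelow (range fun n => u n (pc x)) := by
    intro x
    refine ⟨-((M + 1) * c), ?_⟩
    rintro y ⟨n, rfl⟩
    exact (abs_le.mp (hub n _ (hpc_mem x))).1
  have hanti : ∀ x, Antitone fun n => u n (pc x) :=
    fun x => antitone_nat_of_succ_le fun n => hmono n _ (hpc_mem x)
  have hφt : ∀ x, Tendsto (fun n => u n (pc x)) atTop (𝓝 (φ x)) :=
    fun x => tendsto_atTop_ciInf (hanti x) (hbddb x)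
  have hφt' : ∀ x ∈ Icc (0:ℝ) c, Tendsto (fun n => u n x) atTop (𝓝 (φ x)) := by
    intro x hx
    have := hφt x
    rwa [hpc_id x hx] at this
  have hφ0 : φ 0 = 0 := by
    have hp0 : pc 0 = 0 := hpc_id 0 ⟨le_rfl, hc.le⟩
    rw [hφdef]
    simp only [hp0, hu0, ciInf_const]
  have hφlip : ∀ x y, |φ x - φ y| ≤ (M + 1) * |x - y| := by
    intro x y
    have h1 : Tendsto (fun n => u n (pc x) - u n (pc y)) atTop (𝓝 (φ x - φ y)) :=
      (hφt x).sub (hφt y)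
    have h2 : ∀ n, |u n (pc x) - u n (pc y)| ≤ (M + 1) * |x - y| := by
      intro n
      refine (huLip n _ (hpc_mem x) _ (hpc_mem y)).trans ?_
      have := hpc_lip x y
      nlinarith [abs_nonneg (x - y)]
    exact le_of_tendsto h1.abs (Eventually.of_forall h2)
  have hφcont : Continuous φ := by
    apply (LipschitzWith.of_dist_le_mul (K := Real.toNNReal (M + 1)) ?_).continuous
    intro x y
    rw [Real.dist_eq, Real.dist_eq, Real.coe_toNNReal _ (by linarith : (0:ℝ) ≤ M + 1)]
    exact hφlip x y
  -- integral equation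
  set η : ℝ → ℝ := fun t => F (t, φ t) with hηdef
  have hηcont : Continuous η := hFc.comp (continuous_id.prodMk hφcont)
  have hucont : ∀ n, ContinuousOn (u n) (Icc (0:ℝ) c) :=
    fun n x hx => (hud n x hx).continuousWithinAt
  have hInt : ∀ x ∈ Icc (0:ℝ) c, ∀ n, ∫ t in (0:ℝ)..x, v n (t, u n t) = u n x := by
    intro x hx n
    have hicc : Icc (0:ℝ) x ⊆ Icc (0:ℝ) c := Icc_subset_Icc_right hx.2
    have hcont : ContinuousOn (u n) (Icc 0 x) := (hucont n).mono hicc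
    have hderiv : ∀ t ∈ Ioo (0:ℝ) x, HasDerivWithinAt (u n) (v n (t, u n t)) (Ioi t) t := by
      intro t ht
      have htc : t ∈ Icc (0:ℝ) c := ⟨ht.1.le, ht.2.le.trans hx.2⟩
      exact ((hud n t htc).hasDerivAt
        (Icc_mem_nhds ht.1 (lt_of_lt_of_le ht.2 hx.2))).hasDerivWithinAt
    have hint : IntervalIntegrable (fun t => v n (t, u n t)) volume 0 x := by
      apply ContinuousOn.intervalIntegrable
      rw [uIcc_of_le hx.1]
      exact (hvcont n).comp_continuousOn (continuousOn_id.prodMk hcont)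
    have := intervalIntegral.integral_eq_sub_of_hasDeriv_right_of_le hx.1 hcont hderiv hint
    rw [this, hu0, sub_zero]
  have hueq : ∀ x ∈ Icc (0:ℝ) c, φ x = ∫ t in (0:ℝ)..x, η t := by
    intro x hx
    have h1 : Tendsto (fun n => ∫ t in (0:ℝ)..x, v n (t, u n t)) atTop
        (𝓝 (∫ t in (0:ℝ)..x, η t)) := by
      apply intervalIntegral.tendsto_integral_filter_of_dominated_convergence
        (bound := fun _ => M + 1)
      · refine Eventually.of_forall fun n => ?_
        apply ContinuousOn.aestronglyMeasurable _ measurableSet_uIoc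
        rw [uIoc_of_le hx.1]
        exact ((hvcont n).comp_continuousOn (continuousOn_id.prodMk
          ((hucont n).mono (fun t ht => ⟨ht.1.le, ht.2.trans hx.2⟩))))
      · refine Eventually.of_forall fun n => ae_of_all _ fun t _ => ?_
        rw [Real.norm_eq_abs]
        exact hvabs n _
      · exact intervalIntegrable_const
      · refine ae_of_all _ fun t ht => ?_
        rw [uIoc_of_le hx.1] at ht
        have htI : t ∈ Icc (0:ℝ) c := ⟨ht.1.le, ht.2.trans hx.2⟩
        have hF2 : Tendsto (fun n => F (t, u n t)) atTop (𝓝 (F (t, φ t))) :=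
          (hFc.tendsto (t, φ t)).comp (tendsto_const_nhds.prodMk_nhds (hφt' t htI))
        rw [tendsto_iff_dist_tendsto_zero]
        apply squeeze_zero (fun n => dist_nonneg)
          (g := fun n => 2 * ε n + dist (F (t, u n t)) (η t))
        · intro n
          calc dist (v n (t, u n t)) (η t)
              ≤ dist (v n (t, u n t)) (F (t, u n t)) + dist (F (t, u n t)) (η t) :=
                dist_triangle _ _ _
            _ ≤ 2 * ε n + dist (F (t, u n t)) (η t) := by
                have h1 := hvub n (t, u n t)
                have h2 := hvlb n (t, u n t)
                have h3 := hεpos n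
                rw [Real.dist_eq]
                have : |v n (t, u n t) - F (t, u n t)| ≤ 2 * ε n := by
                  rw [abs_le]; constructor <;> linarith
                linarith
        · have ht1 : Tendsto (fun n => 2 * ε n) atTop (𝓝 0) := by
            have h := hεtend.const_mul 2
            rwa [mul_zero] at h
          have ht2 : Tendsto (fun n => dist (F (t, u n t)) (η t)) atTop (𝓝 0) :=
            tendsto_iff_dist_tendsto_zero.mp hF2
          simpa using ht1.add ht2
    have h2 : Tendsto (fun n => ∫ t in (0:ℝ)..x, v n (t, u n t)) atTop (𝓝 (φ x)) :=
      (hφt' x hx).congr fun n => (hInt x hx n).symm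
    exact tendsto_nhds_unique h2 h1
  -- FTC
  have hΦ : ∀ x : ℝ, HasDerivAt (fun y => ∫ t in (0:ℝ)..y, η t) (η x) x := by
    intro x
    exact intervalIntegral.integral_hasDerivAt_right (hηcont.intervalIntegrable 0 x)
      (hηcont.stronglyMeasurableAtFilter volume (𝓝 x))
      hηcont.continuousAt
  refine ⟨φ, hφ0, fun x hx => ?_⟩
  have hw := (hΦ x).hasDerivWithinAt (s := Icc (0:ℝ) c)
  exact hw.congr (fun y hy => hueq y hy) (hueq x hx)

/-- Theorem 1, case B⁺₁,₌,₌. -/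
theorem theorem1_case_B1_eq_eq
    (G Ghat : Set (ℝ × ℝ)) (hGopen : IsOpen G) (hGhat : Ghat ⊆ frontier G)
    (f₀ : ℝ × ℝ → ℝ) (hf : ContinuousOn f₀ (G ∪ Ghat))
    (hO : ((0 : ℝ), (0 : ℝ)) ∈ Ghat) (hf0 : f₀ (0, 0) = 0)
    (a : ℝ) (ha : 0 < a)
    (bu bu' bl bl' : ℝ → ℝ)
    (hderivu : ∀ x ∈ Icc (0 : ℝ) a, HasDerivWithinAt bu (bu' x) (Icc (0 : ℝ) a) x)
    (hbu'cont : ContinuousOn bu' (Icc (0 : ℝ) a))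
    (hderivl : ∀ x ∈ Icc (0 : ℝ) a, HasDerivWithinAt bl (bl' x) (Icc (0 : ℝ) a) x)
    (hbl'cont : ContinuousOn bl' (Icc (0 : ℝ) a))
    (hbu0 : bu 0 = 0) (hbl0 : bl 0 = 0)
    (hbu'0 : bu' 0 = 0) (hbl'0 : bl' 0 = 0)
    (hconv : ConvexOn ℝ (Icc (0 : ℝ) a) bu)
    (hconc : ConcaveOn ℝ (Icc (0 : ℝ) a) bl)
    (hcurveu : ∀ x ∈ Ioc (0 : ℝ) a, (x, bu x) ∈ Ghat)
    (hcurvel : ∀ x ∈ Ioc (0 : ℝ) a, (x, bl x) ∈ Ghat)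
    (hbcu : ∀ x ∈ Ioc (0 : ℝ) a, f₀ (x, bu x) ≤ bu' x)
    (hbcl : ∀ x ∈ Ioc (0 : ℝ) a, bl' x ≤ f₀ (x, bl x))
    (c : ℝ) (hc : c ∈ Ioc (0 : ℝ) a)
    (hin : ∀ x y : ℝ, 0 < x → x ≤ c → bl x < y → y < bu x → (x, y) ∈ G) :
    ∃ h ∈ Ioc (0 : ℝ) c, ∃ φ : ℝ → ℝ, φ 0 = 0 ∧
      ∀ x ∈ Icc (0 : ℝ) h, (x, φ x) ∈ G ∪ Ghat ∧
        HasDerivWithinAt φ (f₀ (x, φ x)) (Icc (0 : ℝ) h) x := by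
  obtain ⟨hc0, hca⟩ := hc
  have haIcc : ∀ x ∈ Icc (0:ℝ) c, x ∈ Icc (0:ℝ) a := fun x hx => ⟨hx.1, hx.2.trans hca⟩
  have h0a : (0:ℝ) ∈ Icc (0:ℝ) a := ⟨le_rfl, ha.le⟩
  have hbuc : ContinuousOn bu (Icc 0 a) := fun x hx => (hderivu x hx).continuousWithinAt
  have hblc : ContinuousOn bl (Icc 0 a) := fun x hx => (hderivl x hx).continuousWithinAt
  -- sign facts
  have hbu_nonneg : ∀ x ∈ Icc (0:ℝ) a, 0 ≤ bu x := by
    apply aux_convex_nonneg a ha bu _ hbu0 hconv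
    have := hderivu 0 h0a
    rwa [hbu'0] at this
  have hbl_nonpos : ∀ x ∈ Icc (0:ℝ) a, bl x ≤ 0 := by
    intro x hx
    have hneg : ∀ x ∈ Icc (0:ℝ) a, 0 ≤ -bl x := by
      apply aux_convex_nonneg a ha (fun y => -bl y) _ (by simp [hbl0]) hconc.neg
      have := (hderivl 0 h0a).neg
      rwa [hbl'0, neg_zero] at this
    linarith [hneg x hx]
  have hble : ∀ x ∈ Icc (0:ℝ) a, bl x ≤ bu x :=
    fun x hx => (hbl_nonpos x hx).trans (hbu_nonneg x hx)
  -- clamping map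
  set pc : ℝ → ℝ := fun x => max 0 (min x c) with hpcdef
  have hpc_mem : ∀ x, pc x ∈ Icc (0:ℝ) c :=
    fun x => ⟨le_max_left _ _, max_le hc0.le (min_le_right _ _)⟩
  have hpc_id : ∀ x ∈ Icc (0:ℝ) c, pc x = x := by
    intro x hx
    rw [hpcdef]
    simp only []
    rw [min_eq_left hx.2, max_eq_right hx.1]
  have hpc_lip : ∀ x y, |pc x - pc y| ≤ |x - y| := by
    intro x y
    calc |pc x - pc y| ≤ max |(0:ℝ) - 0| |min x c - min y c| := abs_max_sub_max_le_max _ _ _ _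
      _ = |min x c - min y c| := by simp
      _ ≤ max |x - y| |c - c| := abs_min_sub_min_le_max _ _ _ _
      _ = |x - y| := by simp
  set π : ℝ × ℝ → ℝ × ℝ :=
    fun p => (pc p.1, max (bl (pc p.1)) (min p.2 (bu (pc p.1)))) with hπdef
  have hπK : ∀ p : ℝ × ℝ, (π p).1 ∈ Icc (0:ℝ) c ∧ bl (π p).1 ≤ (π p).2 ∧ (π p).2 ≤ bu (π p).1 := by
    intro p
    refine ⟨hpc_mem _, le_max_left _ _, max_le (hble _ (haIcc _ (hpc_mem _))) (min_le_right _ _)⟩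
  have hKmem : ∀ q : ℝ × ℝ, q.1 ∈ Icc (0:ℝ) c → bl q.1 ≤ q.2 → q.2 ≤ bu q.1 → q ∈ G ∪ Ghat := by
    rintro ⟨x, y⟩ hx h1 h2
    replace hx : x ∈ Icc (0:ℝ) c := hx
    replace h1 : bl x ≤ y := h1
    replace h2 : y ≤ bu x := h2
    rcases eq_or_lt_of_le hx.1 with h0 | h0
    · right
      have hx0 : x = 0 := h0.symm
      have hy : y = 0 := by
        rw [hx0] at h1 h2
        rw [hbu0] at h2; rw [hbl0] at h1
        linarith
      rw [hx0, hy]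
      exact hO
    rcases eq_or_lt_of_le h2 with h2' | h2'
    · right
      rw [h2']
      exact hcurveu x ⟨h0, hx.2.trans hca⟩
    rcases eq_or_lt_of_le h1 with h1' | h1'
    · right
      rw [← h1']
      exact hcurvel x ⟨h0, hx.2.trans hca⟩
    · left
      exact hin x y h0 hx.2 h1' h2'
  have hπmem : ∀ p, π p ∈ G ∪ Ghat := fun p => hKmem (π p) (hπK p).1 (hπK p).2.1 (hπK p).2.2
  have hπid : ∀ p : ℝ × ℝ, p.1 ∈ Icc (0:ℝ) c → bl p.1 ≤ p.2 → p.2 ≤ bu p.1 → π p = p := by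
    intro p hp h1 h2
    show (pc p.1, max (bl (pc p.1)) (min p.2 (bu (pc p.1)))) = p
    rw [hpc_id p.1 hp, min_eq_left h2, max_eq_right h1]
  have hpccont : Continuous pc := continuous_const.max (continuous_id.min continuous_const)
  have hblpc : Continuous fun x : ℝ => bl (pc x) :=
    hblc.comp_continuous hpccont fun x => haIcc _ (hpc_mem x)
  have hbupc : Continuous fun x : ℝ => bu (pc x) :=
    hbuc.comp_continuous hpccont fun x => haIcc _ (hpc_mem x)
  have hπcont : Continuous π := by
    apply Continuous.prodMk
    · exact hpccont.comp continuous_fst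
    · exact (hblpc.comp continuous_fst).max
        (continuous_snd.min (hbupc.comp continuous_fst))
  set F : ℝ × ℝ → ℝ := fun p => f₀ (π p) with hFdef
  have hFc : Continuous F := hf.comp_continuous hπcont hπmem
  -- compact image and bound
  obtain ⟨B1, hB1⟩ := (isCompact_Icc (a := (0:ℝ)) (b := a)).exists_bound_of_continuousOn hbuc
  obtain ⟨B2, hB2⟩ := (isCompact_Icc (a := (0:ℝ)) (b := a)).exists_bound_of_continuousOn hblc
  set B : ℝ := |B1| + |B2| + 1 with hBdef
  set Q : Set (ℝ × ℝ) := Icc 0 c ×ˢ Icc (-B) B with hQdef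
  have hQcomp : IsCompact Q := isCompact_Icc.prod isCompact_Icc
  have hπQ : ∀ p, π p ∈ π '' Q := by
    intro p
    refine ⟨π p, ⟨(hπK p).1, ?_, ?_⟩, hπid (π p) (hπK p).1 (hπK p).2.1 (hπK p).2.2⟩
    · have h1 := (hπK p).2.1
      have h2 := hB2 _ (haIcc _ (hπK p).1)
      rw [Real.norm_eq_abs] at h2
      have := (abs_le.mp h2).1
      have hB2' : B2 ≤ |B2| := le_abs_self B2
      simp only [hBdef]
      have : -(|B1| + |B2| + 1) ≤ bl (π p).1 := by
        have := abs_nonneg B1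
        linarith [neg_abs_le B2, (abs_le.mp h2).1]
      linarith
    · have h1 := (hπK p).2.2
      have h2 := hB1 _ (haIcc _ (hπK p).1)
      rw [Real.norm_eq_abs] at h2
      simp only [hBdef]
      have := abs_nonneg B2
      linarith [(abs_le.mp h2).2, le_abs_self B1]
  have hKcomp : IsCompact (π '' Q) := hQcomp.image hπcont
  have hKsub : π '' Q ⊆ G ∪ Ghat := by
    rintro _ ⟨q, _, rfl⟩
    exact hπmem q
  obtain ⟨M, hMb⟩ := hKcomp.exists_bound_of_continuousOn (hf.mono hKsub)
  have hMF : ∀ p, |F p| ≤ M := by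
    intro p
    have := hMb (π p) (hπQ p)
    rwa [Real.norm_eq_abs] at this
  -- uniform continuity
  have hf₀UC := hKcomp.uniformContinuousOn_of_continuous (hf.mono hKsub)
  rw [Metric.uniformContinuousOn_iff] at hf₀UC
  have hblUC := (isCompact_Icc (a := (0:ℝ)) (b := a)).uniformContinuousOn_of_continuous hblc
  have hbuUC := (isCompact_Icc (a := (0:ℝ)) (b := a)).uniformContinuousOn_of_continuous hbuc
  rw [Metric.uniformContinuousOn_iff] at hblUC hbuUC
  have hFUC : ∀ ε > (0:ℝ), ∃ δ > (0:ℝ), ∀ p q : ℝ × ℝ, dist p q < δ → |F p - F q| < ε := by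
    intro ε hε
    obtain ⟨δ₁, hδ₁, h1⟩ := hf₀UC ε hε
    obtain ⟨δ₂, hδ₂, h2⟩ := hblUC δ₁ hδ₁
    obtain ⟨δ₃, hδ₃, h3⟩ := hbuUC δ₁ hδ₁
    refine ⟨min δ₁ (min δ₂ δ₃), by positivity, fun p q hpq => ?_⟩
    have hd1 : dist p.1 q.1 ≤ dist p q := le_max_left _ _
    have hd2 : dist p.2 q.2 ≤ dist p q := le_max_right _ _
    have hpc1 : dist (pc p.1) (pc q.1) ≤ dist p q := by
      rw [Real.dist_eq]
      exact (hpc_lip p.1 q.1).trans (by rw [← Real.dist_eq]; exact hd1)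
    have hmem1 : pc p.1 ∈ Icc (0:ℝ) a := haIcc _ (hpc_mem p.1)
    have hmem2 : pc q.1 ∈ Icc (0:ℝ) a := haIcc _ (hpc_mem q.1)
    have hpcδ₂ : dist (pc p.1) (pc q.1) < δ₂ :=
      lt_of_le_of_lt hpc1 (hpq.trans_le ((min_le_right _ _).trans (min_le_left _ _)))
    have hpcδ₃ : dist (pc p.1) (pc q.1) < δ₃ :=
      lt_of_le_of_lt hpc1 (hpq.trans_le ((min_le_right _ _).trans (min_le_right _ _)))
    have hbl' : |bl (pc p.1) - bl (pc q.1)| < δ₁ := by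
      have := h2 _ hmem1 _ hmem2 hpcδ₂
      rwa [Real.dist_eq] at this
    have hbu' : |bu (pc p.1) - bu (pc q.1)| < δ₁ := by
      have := h3 _ hmem1 _ hmem2 hpcδ₃
      rwa [Real.dist_eq] at this
    have hππ : dist (π p) (π q) < δ₁ := by
      rw [Prod.dist_eq]
      apply max_lt
      · exact lt_of_le_of_lt hpc1 (hpq.trans_le (min_le_left _ _))
      · rw [Real.dist_eq]
        calc |(π p).2 - (π q).2|
            ≤ max |bl (pc p.1) - bl (pc q.1)| |min p.2 (bu (pc p.1)) - min q.2 (bu (pc q.1))| :=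
              abs_max_sub_max_le_max _ _ _ _
          _ < δ₁ := by
              apply max_lt hbl'
              calc |min p.2 (bu (pc p.1)) - min q.2 (bu (pc q.1))|
                  ≤ max |p.2 - q.2| |bu (pc p.1) - bu (pc q.1)| := abs_min_sub_min_le_max _ _ _ _
                _ < δ₁ := by
                    apply max_lt _ hbu'
                    rw [← Real.dist_eq]
                    exact lt_of_le_of_lt hd2 (hpq.trans_le (min_le_left _ _))
    have := h1 _ (hπQ p) _ (hπQ q) hππ
    rwa [Real.dist_eq] at this
  -- Peano
  obtain ⟨φ, hφ0, hφd⟩ := peano_exists F hFc M hMF hFUC c hc0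
  have hφcont : ContinuousOn φ (Icc 0 c) := fun x hx => (hφd x hx).continuousWithinAt
  -- upper funnel bound
  have hupper : ∀ x ∈ Icc (0:ℝ) c, φ x ≤ bu x := by
    intro x₁ hx₁
    by_contra hgt
    push_neg at hgt
    set ψ : ℝ → ℝ := fun x => φ x - bu x with hψdef
    have hψc : ContinuousOn ψ (Icc 0 c) := hφcont.sub (hbuc.mono haIcc)
    set T : Set ℝ := Icc 0 x₁ ∩ ψ ⁻¹' (Iic 0) with hT
    have hTsub : T ⊆ Icc 0 c := fun t ht => ⟨ht.1.1, ht.1.2.trans hx₁.2⟩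
    have hTne : T.Nonempty := ⟨0, ⟨le_rfl, hx₁.1⟩, by simp [hψdef, hφ0, hbu0]⟩
    have hTbdd : BddAbove T := ⟨x₁, fun t ht => ht.1.2⟩
    have hTclosed : IsClosed T :=
      (hψc.mono (Icc_subset_Icc_right hx₁.2)).preimage_isClosed_of_isClosed
        isClosed_Icc isClosed_Iic
    set x₀ : ℝ := sSup T with hx₀def
    have hx₀T : x₀ ∈ T := hTclosed.csSup_mem hTne hTbdd
    have hψx₁ : 0 < ψ x₁ := by simp [hψdef]; linarith
    have hx₀lt : x₀ < x₁ := by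
      rcases eq_or_lt_of_le hx₀T.1.2 with h | h
      · exfalso; have := hx₀T.2; rw [h] at this; simp only [mem_preimage, mem_Iic] at this; linarith
      · exact h
    have hpos : ∀ x ∈ Ioc x₀ x₁, 0 < ψ x := by
      intro x hx
      by_contra hle
      push_neg at hle
      have hxT : x ∈ T := ⟨⟨hx₀T.1.1.trans hx.1.le, hx.2⟩, hle⟩
      exact absurd (le_csSup hTbdd hxT) (not_le.mpr hx.1)
    have hψanti : AntitoneOn ψ (Icc x₀ x₁) := by
      have hder : ∀ x ∈ Ioo x₀ x₁, HasDerivAt ψ (F (x, φ x) - bu' x) x := by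
        intro x hx
        have hx0 : 0 < x := lt_of_le_of_lt hx₀T.1.1 hx.1
        have hxc : x < c := lt_of_lt_of_le hx.2 hx₁.2
        have hxa : x < a := lt_of_lt_of_le hxc hca
        have h1 : HasDerivAt φ (F (x, φ x)) x :=
          (hφd x ⟨hx0.le, hxc.le⟩).hasDerivAt (Icc_mem_nhds hx0 hxc)
        have h2 : HasDerivAt bu (bu' x) x :=
          (hderivu x ⟨hx0.le, hxa.le⟩).hasDerivAt (Icc_mem_nhds hx0 hxa)
        exact h1.sub h2
      apply antitoneOn_of_deriv_nonpos (convex_Icc _ _)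
        (hψc.mono fun t ht => ⟨hx₀T.1.1.trans ht.1, ht.2.trans hx₁.2⟩)
      · rw [interior_Icc]
        intro x hx
        exact (hder x hx).differentiableAt.differentiableWithinAt
      · rw [interior_Icc]
        intro x hx
        rw [(hder x hx).deriv]
        have hx0 : 0 < x := lt_of_le_of_lt hx₀T.1.1 hx.1
        have hxc : x < c := lt_of_lt_of_le hx.2 hx₁.2
        have hxa : x ∈ Icc (0:ℝ) a := ⟨hx0.le, (hxc.le.trans hca)⟩
        have hxgt : bu x < φ x := by
          have := hpos x ⟨hx.1, hx.2.le⟩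
          simp only [hψdef] at this
          linarith
        have hFeq : F (x, φ x) = f₀ (x, bu x) := by
          show f₀ (pc x, max (bl (pc x)) (min (φ x) (bu (pc x)))) = f₀ (x, bu x)
          rw [hpc_id x ⟨hx0.le, hxc.le⟩]
          rw [min_eq_right hxgt.le, max_eq_right (hble x hxa)]
        rw [hFeq]
        have := hbcu x ⟨hx0, hxa.2⟩
        linarith
    have hx₀x₁ : x₀ ≤ x₁ := hx₀lt.le
    have := hψanti (left_mem_Icc.mpr hx₀x₁) (right_mem_Icc.mpr hx₀x₁) hx₀x₁
    have hψx₀ : ψ x₀ ≤ 0 := hx₀T.2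
    linarith
  -- lower funnel bound
  have hlower : ∀ x ∈ Icc (0:ℝ) c, bl x ≤ φ x := by
    intro x₁ hx₁
    by_contra hgt
    push_neg at hgt
    set ψ : ℝ → ℝ := fun x => bl x - φ x with hψdef
    have hψc : ContinuousOn ψ (Icc 0 c) := (hblc.mono haIcc).sub hφcont
    set T : Set ℝ := Icc 0 x₁ ∩ ψ ⁻¹' (Iic 0) with hT
    have hTsub : T ⊆ Icc 0 c := fun t ht => ⟨ht.1.1, ht.1.2.trans hx₁.2⟩
    have hTne : T.Nonempty := ⟨0, ⟨le_rfl, hx₁.1⟩, by simp [hψdef, hφ0, hbl0]⟩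
    have hTbdd : BddAbove T := ⟨x₁, fun t ht => ht.1.2⟩
    have hTclosed : IsClosed T :=
      (hψc.mono (Icc_subset_Icc_right hx₁.2)).preimage_isClosed_of_isClosed
        isClosed_Icc isClosed_Iic
    set x₀ : ℝ := sSup T with hx₀def
    have hx₀T : x₀ ∈ T := hTclosed.csSup_mem hTne hTbdd
    have hψx₁ : 0 < ψ x₁ := by simp [hψdef]; linarith
    have hx₀lt : x₀ < x₁ := by
      rcases eq_or_lt_of_le hx₀T.1.2 with h | h
      · exfalso; have := hx₀T.2; rw [h] at this; simp only [mem_preimage, mem_Iic] at this; linarith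
      · exact h
    have hpos : ∀ x ∈ Ioc x₀ x₁, 0 < ψ x := by
      intro x hx
      by_contra hle
      push_neg at hle
      have hxT : x ∈ T := ⟨⟨hx₀T.1.1.trans hx.1.le, hx.2⟩, hle⟩
      exact absurd (le_csSup hTbdd hxT) (not_le.mpr hx.1)
    have hψanti : AntitoneOn ψ (Icc x₀ x₁) := by
      have hder : ∀ x ∈ Ioo x₀ x₁, HasDerivAt ψ (bl' x - F (x, φ x)) x := by
        intro x hx
        have hx0 : 0 < x := lt_of_le_of_lt hx₀T.1.1 hx.1
        have hxc : x < c := lt_of_lt_of_le hx.2 hx₁.2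
        have hxa : x < a := lt_of_lt_of_le hxc hca
        have h1 : HasDerivAt φ (F (x, φ x)) x :=
          (hφd x ⟨hx0.le, hxc.le⟩).hasDerivAt (Icc_mem_nhds hx0 hxc)
        have h2 : HasDerivAt bl (bl' x) x :=
          (hderivl x ⟨hx0.le, hxa.le⟩).hasDerivAt (Icc_mem_nhds hx0 hxa)
        exact h2.sub h1
      apply antitoneOn_of_deriv_nonpos (convex_Icc _ _)
        (hψc.mono fun t ht => ⟨hx₀T.1.1.trans ht.1, ht.2.trans hx₁.2⟩)
      · rw [interior_Icc]
        intro x hx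
        exact (hder x hx).differentiableAt.differentiableWithinAt
      · rw [interior_Icc]
        intro x hx
        rw [(hder x hx).deriv]
        have hx0 : 0 < x := lt_of_le_of_lt hx₀T.1.1 hx.1
        have hxc : x < c := lt_of_lt_of_le hx.2 hx₁.2
        have hxa : x ∈ Icc (0:ℝ) a := ⟨hx0.le, (hxc.le.trans hca)⟩
        have hxgt : φ x < bl x := by
          have := hpos x ⟨hx.1, hx.2.le⟩
          simp only [hψdef] at this
          linarith
        have hFeq : F (x, φ x) = f₀ (x, bl x) := by
          show f₀ (pc x, max (bl (pc x)) (min (φ x) (bu (pc x)))) = f₀ (x, bl x)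
          rw [hpc_id x ⟨hx0.le, hxc.le⟩]
          rw [min_eq_left (hxgt.le.trans (hble x hxa)), max_eq_left hxgt.le]
        rw [hFeq]
        have := hbcl x ⟨hx0, hxa.2⟩
        linarith
    have hx₀x₁ : x₀ ≤ x₁ := hx₀lt.le
    have := hψanti (left_mem_Icc.mpr hx₀x₁) (right_mem_Icc.mpr hx₀x₁) hx₀x₁
    have hψx₀ : ψ x₀ ≤ 0 := hx₀T.2
    linarith
  -- conclusion
  refine ⟨c, ⟨hc0, le_rfl⟩, φ, hφ0, fun x hx => ?_⟩
  have h1 := hlower x hx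
  have h2 := hupper x hx
  have hid : π (x, φ x) = (x, φ x) := hπid (x, φ x) hx h1 h2
  constructor
  · exact hKmem (x, φ x) hx h1 h2
  · have hd := hφd x hx
    have hFeq : F (x, φ x) = f₀ (x, φ x) := by
      show f₀ (π (x, φ x)) = f₀ (x, φ x)
      rw [hid]
    rwa [hFeq] at hd
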